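/- Let A : ℝⁿ → ℝⁿ be a symmetric continuous linear map, let ρ : ℝⁿ → ℝ be continuously differentiable and strictly positive, and let λ : ℝⁿ → ℝⁿ be a continuously differentiable vector field with compact support. Then ∫_{ℝⁿ} ⟨λ(x), A(∇(log ∘ ρ)(x))⟩ ρ(x) dx = − ∫_{ℝⁿ} tr(Dλ(x) ∘ A) ρ(x) dx, where Dλ(x) is the Fréchet derivative of λ at x and both integrals are with respect to the Lebesgue measure on ℝⁿ. -/

import Mathlib

open MeasureTheory
open scoped RealInnerProductSpace

/-- Integration by parts for `C¹` functions on Euclidean space, one of them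
compactly supported. -/
lemma ibp_aux {n : ℕ} (f g : EuclideanSpace ℝ (Fin n) → ℝ) (hf : ContDiff ℝ 1 f)
    (hg : ContDiff ℝ 1 g) (hgsupp : HasCompactSupport g) (v : EuclideanSpace ℝ (Fin n)) :
    ∫ x, fderiv ℝ f x v * g x = - ∫ x, fderiv ℝ g x v * f x := by
  obtain ⟨r, hr⟩ := hgsupp.isBounded.subset_ball 0
  set R : ℝ := |r| + 1 with hR
  have hsub : tsupport g ⊆ Metric.ball 0 R := by
    refine hr.trans (Metric.ball_subset_ball ?_)
    have := le_abs_self r; linarith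
  have hRpos : (0:ℝ) < R := by positivity
  set φ : ContDiffBump (0 : EuclideanSpace ℝ (Fin n)) :=
    ⟨R, R + 1, hRpos, by linarith⟩ with hφ
  set F : EuclideanSpace ℝ (Fin n) → ℝ := fun x => φ x * f x with hFdef
  have hF : ContDiff ℝ 1 F := φ.contDiff.mul hf
  have hFsupp : HasCompactSupport F := φ.hasCompactSupport.mul_right
  obtain ⟨C, hC⟩ := ContDiff.lipschitzWith_of_hasCompactSupport hFsupp hF one_ne_zero
  obtain ⟨D, hD⟩ := ContDiff.lipschitzWith_of_hasCompactSupport hgsupp hg one_ne_zero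
  have key := LipschitzWith.integral_lineDeriv_mul_eq (μ := volume) hC hD hgsupp v
  have hFf : ∀ x ∈ Metric.ball (0 : EuclideanSpace ℝ (Fin n)) R, F x = f x := by
    intro x hx
    have : φ x = 1 := φ.one_of_mem_closedBall (Metric.ball_subset_closedBall hx)
    simp [hFdef, this]
  have e1 : ∀ x, lineDeriv ℝ F x v * g x = fderiv ℝ f x v * g x := by
    intro x
    by_cases hx : x ∈ Metric.ball (0 : EuclideanSpace ℝ (Fin n)) R
    · have hev : F =ᶠ[nhds x] f :=
        Filter.eventually_of_mem (Metric.isOpen_ball.mem_nhds hx) hFf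
      rw [hev.lineDeriv_eq, (hf.differentiable one_ne_zero x).lineDeriv_eq_fderiv]
    · have : g x = 0 := image_eq_zero_of_notMem_tsupport (fun h => hx (hsub h))
      simp [this]
  have e2 : ∀ x, lineDeriv ℝ g x (-v) * F x = -(fderiv ℝ g x v * f x) := by
    intro x
    by_cases hx : x ∈ Metric.ball (0 : EuclideanSpace ℝ (Fin n)) R
    · rw [hFf x hx, (hg.differentiable one_ne_zero x).lineDeriv_eq_fderiv, map_neg, neg_mul]
    · have hx' : x ∉ tsupport g := fun h => hx (hsub h)
      rw [notMem_tsupport_iff_eventuallyEq] at hx'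
      have h1 : lineDeriv ℝ g x (-v) = 0 := by
        rw [hx'.lineDeriv_eq]
        simp [lineDeriv]
      have h2 : fderiv ℝ g x = 0 := by
        rw [hx'.fderiv_eq]; exact fderiv_const_apply 0
      simp [h1, h2]
  simp only [e1, e2] at key
  rw [key, integral_neg]

theorem stmt9 (n : ℕ)
    (A : EuclideanSpace ℝ (Fin n) →L[ℝ] EuclideanSpace ℝ (Fin n))
    (hA : ∀ u v : EuclideanSpace ℝ (Fin n), ⟪A u, v⟫ = ⟪u, A v⟫)
    (ρ : EuclideanSpace ℝ (Fin n) → ℝ) (hρ : ContDiff ℝ 1 ρ)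
    (hpos : ∀ x : EuclideanSpace ℝ (Fin n), 0 < ρ x)
    (lam : EuclideanSpace ℝ (Fin n) → EuclideanSpace ℝ (Fin n))
    (hlam : ContDiff ℝ 1 lam) (hsupp : HasCompactSupport lam) :
    ∫ x : EuclideanSpace ℝ (Fin n),
        ⟪lam x, A (gradient (Real.log ∘ ρ) x)⟫ * ρ x
      = - ∫ x : EuclideanSpace ℝ (Fin n),
          (LinearMap.trace ℝ (EuclideanSpace ℝ (Fin n))
            ((fderiv ℝ lam x).toLinearMap ∘ₗ A.toLinearMap)) * ρ x := by
  set e : Fin n → EuclideanSpace ℝ (Fin n) := fun i => EuclideanSpace.single i 1 with he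
  set gA : Fin n → EuclideanSpace ℝ (Fin n) → ℝ := fun i x => A (lam x) i with hgA
  have hgA_cd : ∀ i, ContDiff ℝ 1 (gA i) := by
    intro i
    have : ContDiff ℝ 1 (⇑(EuclideanSpace.proj (𝕜 := ℝ) i) ∘ ⇑A ∘ lam) :=
      (EuclideanSpace.proj i).contDiff.comp (A.contDiff.comp hlam)
    exact this
  have hgA_supp : ∀ i, HasCompactSupport (gA i) := by
    intro i
    have : HasCompactSupport ((fun y : EuclideanSpace ℝ (Fin n) => A y i) ∘ lam) :=
      hsupp.comp_left (g := fun y => A y i) (by simp)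
    exact this
  -- decomposition of vectors in the standard basis
  have hy : ∀ y : EuclideanSpace ℝ (Fin n), ∑ i, y i • e i = y := by
    intro y
    simpa [he, EuclideanSpace.basisFun_apply, EuclideanSpace.basisFun_repr]
      using (EuclideanSpace.basisFun (Fin n) ℝ).sum_repr y
  -- pointwise identity for the left integrand
  have hL : ∀ x, ⟪lam x, A (gradient (Real.log ∘ ρ) x)⟫ * ρ x
      = ∑ i, fderiv ℝ ρ x (e i) * gA i x := by
    intro x
    have hder : fderiv ℝ (Real.log ∘ ρ) x = (ρ x)⁻¹ • fderiv ℝ ρ x :=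
      ((Real.hasDerivAt_log (hpos x).ne').comp_hasFDerivAt x
        (hρ.differentiable one_ne_zero x).hasFDerivAt).fderiv
    have hgrad : ∀ y : EuclideanSpace ℝ (Fin n), ⟪y, gradient (Real.log ∘ ρ) x⟫ = fderiv ℝ (Real.log ∘ ρ) x y := by
      intro y
      rw [real_inner_comm]
      simp [gradient, InnerProductSpace.toDual_symm_apply]
    have step1 : ⟪lam x, A (gradient (Real.log ∘ ρ) x)⟫ * ρ x
        = fderiv ℝ ρ x (A (lam x)) := by
      rw [← hA, hgrad, hder]
      have : (ρ x) ≠ 0 := (hpos x).ne'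
      simp only [ContinuousLinearMap.coe_smul', Pi.smul_apply, smul_eq_mul]
      field_simp
    rw [step1]
    conv_lhs => rw [← hy (A (lam x))]
    rw [map_sum]
    refine Finset.sum_congr rfl fun i _ => ?_
    rw [(fderiv ℝ ρ x).map_smul, smul_eq_mul, mul_comm]
  -- pointwise identity for the trace
  have hfd : ∀ i x (v : EuclideanSpace ℝ (Fin n)), fderiv ℝ (gA i) x v = A (fderiv ℝ lam x v) i := by
    intro i x v
    have h1 : HasFDerivAt (gA i)
        (((EuclideanSpace.proj i).comp A).comp (fderiv ℝ lam x)) x :=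
      (((EuclideanSpace.proj i).comp A).hasFDerivAt).comp x
        (hlam.differentiable one_ne_zero x).hasFDerivAt
    rw [h1.fderiv]
    rfl
  have hT : ∀ x, (LinearMap.trace ℝ (EuclideanSpace ℝ (Fin n)) ((fderiv ℝ lam x).toLinearMap ∘ₗ A.toLinearMap))
      = ∑ i, fderiv ℝ (gA i) x (e i) := by
    intro x
    have comm : LinearMap.trace ℝ (EuclideanSpace ℝ (Fin n)) ((fderiv ℝ lam x).toLinearMap ∘ₗ A.toLinearMap)
        = LinearMap.trace ℝ (EuclideanSpace ℝ (Fin n)) (A.toLinearMap ∘ₗ (fderiv ℝ lam x).toLinearMap) := by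
      rw [← Module.End.mul_eq_comp, ← Module.End.mul_eq_comp, LinearMap.trace_mul_comm]
    rw [comm, LinearMap.trace_eq_matrix_trace ℝ (EuclideanSpace.basisFun (Fin n) ℝ).toBasis,
      Matrix.trace]
    refine Finset.sum_congr rfl fun i _ => ?_
    rw [Matrix.diag_apply, LinearMap.toMatrix_apply, hfd]
    simp [he, EuclideanSpace.basisFun_apply, EuclideanSpace.basisFun_repr]
  -- integrability
  have hcont_fρ : Continuous (fderiv ℝ ρ) := hρ.continuous_fderiv one_ne_zero
  have int1 : ∀ i, Integrable (fun x => fderiv ℝ ρ x (e i) * gA i x) := by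
    intro i
    refine Continuous.integrable_of_hasCompactSupport ?_ ((hgA_supp i).mul_left)
    exact (hcont_fρ.clm_apply continuous_const).mul (hgA_cd i).continuous
  have int2 : ∀ i, Integrable (fun x => fderiv ℝ (gA i) x (e i) * ρ x) := by
    intro i
    refine Continuous.integrable_of_hasCompactSupport ?_ ?_
    · exact (((hgA_cd i).continuous_fderiv one_ne_zero).clm_apply continuous_const).mul
        hρ.continuous
    · exact ((hgA_supp i).fderiv_apply (𝕜 := ℝ) (e i)).mul_right
  calc ∫ x, ⟪lam x, A (gradient (Real.log ∘ ρ) x)⟫ * ρ x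
      = ∫ x, ∑ i, fderiv ℝ ρ x (e i) * gA i x := by
        exact integral_congr_ae (Filter.Eventually.of_forall hL)
    _ = ∑ i, ∫ x, fderiv ℝ ρ x (e i) * gA i x :=
        integral_finset_sum _ fun i _ => int1 i
    _ = ∑ i, -∫ x, fderiv ℝ (gA i) x (e i) * ρ x := by
        refine Finset.sum_congr rfl fun i _ => ?_
        exact ibp_aux ρ (gA i) hρ (hgA_cd i) (hgA_supp i) (e i)
    _ = - ∑ i, ∫ x, fderiv ℝ (gA i) x (e i) * ρ x := by rw [Finset.sum_neg_distrib]
    _ = - ∫ x, ∑ i, fderiv ℝ (gA i) x (e i) * ρ x := by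
        rw [integral_finset_sum _ fun i _ => int2 i]
    _ = - ∫ x, (LinearMap.trace ℝ (EuclideanSpace ℝ (Fin n)) ((fderiv ℝ lam x).toLinearMap ∘ₗ A.toLinearMap)) * ρ x := by
        congr 1
        refine integral_congr_ae (Filter.Eventually.of_forall fun x => ?_)
        simp only [hT x, Finset.sum_mul]
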